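/- Let A ⊆ ℕ be finite and B ⊆ ℕ be such that R_{A+B}(n) = 1 for all n ≥ n₁. Then, with f_A and f_B the (formal) power series Σ_{a∈A} z^a and Σ_{b∈B} z^b, there exist polynomials p₁(z), F_B(z), T(z) with integer coefficients and a positive integer M such that (1 − z^M)·f_A(z)·F_B(z) + f_A(z)·T(z) = (1 − z^M)·p₁(z) + (1 + z + ... + z^{M−1})·z^{n₁} as an identity of polynomials, where f_B(z) = F_B(z) + T(z)/(1 − z^M). -/

import Mathlib

open Polynomial

noncomputable def rep (A B : Set ℕ) (n : ℕ) : ℕ :=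
  {q : ℕ × ℕ | q.1 ∈ A ∧ q.2 ∈ B ∧ q.1 + q.2 = n}.ncard

open scoped Classical in
lemma rep_eq_sum (A : Finset ℕ) (B : Set ℕ) (n : ℕ) :
    (rep ↑A B n : ℤ) = ∑ a ∈ A, if a ≤ n ∧ n - a ∈ B then (1:ℤ) else 0 := by
  have hset : {q : ℕ × ℕ | q.1 ∈ (↑A : Set ℕ) ∧ q.2 ∈ B ∧ q.1 + q.2 = n}
      = ↑(((A.filter (fun a => a ≤ n ∧ n - a ∈ B)).image (fun a => (a, n - a)))) := by
    ext ⟨x, y⟩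
    simp only [Set.mem_setOf_eq, Finset.coe_image, Set.mem_image, Finset.mem_coe,
      Finset.mem_filter, Prod.mk.injEq]
    constructor
    · rintro ⟨hx, hy, hxy⟩
      have hyx : n - x = y := by omega
      exact ⟨x, ⟨hx, by omega, by rwa [hyx]⟩, rfl, hyx⟩
    · rintro ⟨a, ⟨ha, han, hb⟩, rfl, rfl⟩
      exact ⟨ha, hb, by omega⟩
  rw [rep, hset, Set.ncard_coe_finset,
    Finset.card_image_of_injective _ (fun a b h => (Prod.ext_iff.mp h).1),
    Finset.sum_boole]

open scoped Classical in
lemma det_lemma (A : Finset ℕ) (hA : A.Nonempty) (B : Set ℕ) (n₁ : ℕ)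
    (hrep : ∀ n ≥ n₁, rep ↑A B n = 1)
    {k k' : ℕ} (hk : n₁ ≤ k) (hk' : n₁ ≤ k')
    (hw : ∀ i < A.max' hA - A.min' hA, (k + i ∈ B ↔ k' + i ∈ B)) :
    (k + (A.max' hA - A.min' hA) ∈ B ↔ k' + (A.max' hA - A.min' hA) ∈ B) := by
  set amin := A.min' hA with hamin
  set amax := A.max' hA with hamax
  set L := amax - amin with hLdef
  have hminmax : amin ≤ amax := A.min'_le _ (A.max'_mem hA)
  have hsum : ∀ m : ℕ, n₁ ≤ m →
      (∑ a ∈ A, if m + amax - a ∈ B then (1:ℤ) else 0) = 1 := by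
    intro m hm
    have h1 := rep_eq_sum A B (m + amax)
    have h2 : rep ↑A B (m + amax) = 1 := hrep _ (by omega)
    rw [h2] at h1
    calc (∑ a ∈ A, if m + amax - a ∈ B then (1:ℤ) else 0)
        = ∑ a ∈ A, if a ≤ m + amax ∧ m + amax - a ∈ B then (1:ℤ) else 0 := by
          apply Finset.sum_congr rfl
          intro a ha
          have hle : a ≤ amax := A.le_max' a ha
          have hiff : (m + amax - a ∈ B) ↔ (a ≤ m + amax ∧ m + amax - a ∈ B) :=
            ⟨fun h => ⟨by omega, h⟩, fun h => h.2⟩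
          rw [if_congr hiff rfl rfl]
      _ = 1 := by rw [← h1]; norm_num
  have hkk := hsum k hk
  have hkk' := hsum k' hk'
  have hmem : amin ∈ A := A.min'_mem hA
  rw [← Finset.add_sum_erase _ _ hmem] at hkk hkk'
  have herase : (∑ a ∈ A.erase amin, if k + amax - a ∈ B then (1:ℤ) else 0)
      = ∑ a ∈ A.erase amin, if k' + amax - a ∈ B then (1:ℤ) else 0 := by
    apply Finset.sum_congr rfl
    intro a ha
    have haA : a ∈ A := Finset.mem_of_mem_erase ha
    have hne : a ≠ amin := Finset.ne_of_mem_erase ha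
    have h1 : amin ≤ a := A.min'_le a haA
    have h2 : a ≤ amax := A.le_max' a haA
    have hi : amax - a < L := by omega
    have e1 : k + amax - a = k + (amax - a) := by omega
    have e2 : k' + amax - a = k' + (amax - a) := by omega
    rw [e1, e2, if_congr (hw _ hi) rfl rfl]
  rw [herase] at hkk
  have hhead : (if k + amax - amin ∈ B then (1:ℤ) else 0)
      = if k' + amax - amin ∈ B then (1:ℤ) else 0 := by omega
  have e1 : k + amax - amin = k + L := by omega
  have e2 : k' + amax - amin = k' + L := by omega
  rw [e1, e2] at hhead
  by_cases h : k + L ∈ B <;> by_cases h' : k' + L ∈ B <;> simp_all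

lemma periodic_lemma (A : Finset ℕ) (hA : A.Nonempty) (B : Set ℕ) (n₁ : ℕ)
    (hrep : ∀ n ≥ n₁, rep ↑A B n = 1) :
    ∃ M, 0 < M ∧ ∃ N, n₁ ≤ N ∧ ∀ m, N ≤ m → (m ∈ B ↔ m + M ∈ B) := by
  classical
  set L := A.max' hA - A.min' hA with hLdef
  set w : ℕ → (Fin L → Bool) := fun c i => decide (n₁ + c + (i : ℕ) ∈ B) with hw
  obtain ⟨x, y, hxy, hwxy⟩ := Finite.exists_ne_map_eq_of_infinite w
  have key : ∀ x y : ℕ, x < y → w x = w y →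
      ∃ M, 0 < M ∧ ∃ N, n₁ ≤ N ∧ ∀ m, N ≤ m → (m ∈ B ↔ m + M ∈ B) := by
    intro x y hlt hwe
    refine ⟨y - x, by omega, n₁ + x, by omega, ?_⟩
    have claim : ∀ j, (n₁ + x + j ∈ B ↔ n₁ + y + j ∈ B) := by
      intro j
      induction j using Nat.strong_induction_on with
      | _ j ih =>
        by_cases hj : j < L
        · have := congrFun hwe ⟨j, hj⟩
          simpa [hw] using this
        · have hjL : L ≤ j := not_lt.mp hj
          have hdet := det_lemma A hA B n₁ hrep
            (k := n₁ + x + (j - L)) (k' := n₁ + y + (j - L)) (by omega) (by omega)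
            (fun i hi => by
              have e1 : n₁ + x + (j - L) + i = n₁ + x + (j - L + i) := by omega
              have e2 : n₁ + y + (j - L) + i = n₁ + y + (j - L + i) := by omega
              rw [e1, e2]
              exact ih _ (by omega))
          have e1 : n₁ + x + (j - L) + L = n₁ + x + j := by omega
          have e2 : n₁ + y + (j - L) + L = n₁ + y + j := by omega
          rwa [e1, e2] at hdet
    intro m hm
    have := claim (m - (n₁ + x))
    have e1 : n₁ + x + (m - (n₁ + x)) = m := by omega
    have e2 : n₁ + y + (m - (n₁ + x)) = m + (y - x) := by omega
    rwa [e1, e2] at this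
  rcases hxy.lt_or_gt with h | h
  · exact key x y h hwxy
  · exact key y x h hwxy.symm

open scoped Classical in
lemma coeff_site (B : Set ℕ) (s : Finset ℕ) (m : ℕ) :
    (∑ b ∈ s, if b ∈ B then (X:ℤ[X])^b else 0).coeff m = if m ∈ s ∧ m ∈ B then 1 else 0 := by
  rw [Polynomial.finset_sum_coeff]
  have h : ∀ b ∈ s, ((if b ∈ B then (X:ℤ[X])^b else 0).coeff m)
      = if m = b then (if b ∈ B then (1:ℤ) else 0) else 0 := by
    intro b _
    by_cases h1 : b ∈ B <;> by_cases h2 : m = b <;>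
      simp [h1, h2, coeff_X_pow]
  rw [Finset.sum_congr rfl h, Finset.sum_ite_eq s m (fun b => if b ∈ B then (1:ℤ) else 0)]
  by_cases h1 : m ∈ s <;> by_cases h2 : m ∈ B <;> simp [h1, h2]

lemma coeff_Csum (f : ℕ → ℤ) (n₁ m : ℕ) :
    (∑ k ∈ Finset.range n₁, C (f k) * (X:ℤ[X])^k).coeff m = if m < n₁ then f m else 0 := by
  rw [Polynomial.finset_sum_coeff]
  simp only [coeff_C_mul, coeff_X_pow, mul_ite, mul_one, mul_zero]
  rw [Finset.sum_ite_eq (Finset.range n₁) m f]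
  simp [Finset.mem_range]

lemma coeff_rsum (M d : ℕ) :
    (∑ i ∈ Finset.range M, (X:ℤ[X])^i).coeff d = if d < M then 1 else 0 := by
  rw [Polynomial.finset_sum_coeff]
  simp only [coeff_X_pow]
  rw [Finset.sum_ite_eq (Finset.range M) d (fun _ => (1:ℤ))]
  simp [Finset.mem_range]

theorem stmt14 (A : Finset ℕ) (B : Set ℕ) (n₁ : ℕ)
    (hrep : ∀ n ≥ n₁, rep (↑A) B n = 1) :
    ∃ (p₁ F T : Polynomial ℤ) (M : ℕ), 0 < M ∧
      (1 - (X : Polynomial ℤ) ^ M) * (∑ a ∈ A, X ^ a) * F + (∑ a ∈ A, X ^ a) * T =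
        (1 - (X : Polynomial ℤ) ^ M) * p₁ +
          (∑ i ∈ Finset.range M, (X : Polynomial ℤ) ^ i) * X ^ n₁ ∧
      ∀ z : ℂ, ‖z‖ < 1 →
        (∑' b : B, z ^ (b : ℕ)) =
          Polynomial.aeval z F + Polynomial.aeval z T / (1 - z ^ M) := by
  classical
  have hA : A.Nonempty := by
    by_contra h
    rw [Finset.not_nonempty_iff_eq_empty] at h
    have h0 := hrep n₁ le_rfl
    subst h
    simp [rep] at h0
  obtain ⟨M, hM, N, hN, hper⟩ := periodic_lemma A hA B n₁ hrep
  set F : ℤ[X] := ∑ b ∈ Finset.range N, if b ∈ B then X^b else 0 with hF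
  set T : ℤ[X] := ∑ b ∈ Finset.Ico N (N+M), if b ∈ B then X^b else 0 with hT
  set Q : ℤ[X] := ∑ k ∈ Finset.range n₁, C ((rep ↑A B k : ℤ)) * X^k with hQ
  refine ⟨Q, F, T, M, hM, ?_, ?_⟩
  · -- polynomial identity
    have hP : ∀ m : ℕ, ((1 - (X:ℤ[X])^M) * F + T).coeff m
        = (if m ∈ B then (1:ℤ) else 0) - (if M ≤ m ∧ m - M ∈ B then 1 else 0) := by
      intro m
      have h1 : (1 - (X:ℤ[X])^M) * F + T = F + T - X^M * F := by ring
      rw [h1, coeff_sub, coeff_add, X_pow_mul, coeff_mul_X_pow', hF, hT,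
        coeff_site, coeff_site, coeff_site]
      simp only [Finset.mem_range, Finset.mem_Ico]
      rcases lt_or_ge m (N + M) with hm | hm
      · by_cases hB : m ∈ B <;> by_cases hB' : m - M ∈ B <;>
          simp only [hB, hB', and_true, and_false, if_false, if_true] <;>
          split_ifs <;> omega
      · have hiff : m - M ∈ B ↔ m ∈ B := by
          have h2 := hper (m - M) (by omega)
          rwa [show m - M + M = m by omega] at h2
        by_cases hB : m ∈ B
        · have hB' : m - M ∈ B := hiff.mpr hB
          simp only [hB, hB', and_true, and_false, if_false, if_true] <;>
            split_ifs <;> omega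
        · have hB' : m - M ∉ B := fun h => hB (hiff.mp h)
          simp only [hB, hB', and_true, and_false, if_false, if_true] <;>
            split_ifs <;> omega
    have hL : (1 - (X:ℤ[X])^M) * (∑ a ∈ A, X ^ a) * F + (∑ a ∈ A, X ^ a) * T
        = (∑ a ∈ A, (X:ℤ[X]) ^ a) * ((1 - X^M) * F + T) := by ring
    rw [hL]
    ext n
    -- LHS coefficient
    rw [Finset.sum_mul, Polynomial.finset_sum_coeff]
    have step1 : ∀ a ∈ A, ((X:ℤ[X])^a * ((1 - X^M) * F + T)).coeff n
        = (if a ≤ n ∧ n - a ∈ B then (1:ℤ) else 0)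
          - (if a + M ≤ n ∧ n - M - a ∈ B then 1 else 0) := by
      intro a _
      rw [X_pow_mul, coeff_mul_X_pow']
      by_cases h : a ≤ n
      · rw [if_pos h, hP]
        congr 1
        · exact if_congr ⟨fun hh => ⟨h, hh⟩, fun hh => hh.2⟩ rfl rfl
        · refine if_congr ?_ rfl rfl
          constructor
          · rintro ⟨h1, h2⟩
            exact ⟨by omega, by rwa [show n - M - a = n - a - M by omega]⟩
          · rintro ⟨h1, h2⟩
            exact ⟨by omega, by rwa [show n - a - M = n - M - a by omega]⟩
      · rw [if_neg h, if_neg (by intro hh; exact h hh.1),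
          if_neg (by intro hh; omega), sub_zero]
    rw [Finset.sum_congr rfl step1, Finset.sum_sub_distrib, ← rep_eq_sum]
    have step2 : (∑ a ∈ A, if a + M ≤ n ∧ n - M - a ∈ B then (1:ℤ) else 0)
        = if M ≤ n then (rep ↑A B (n - M) : ℤ) else 0 := by
      by_cases hMn : M ≤ n
      · rw [if_pos hMn, rep_eq_sum]
        apply Finset.sum_congr rfl
        intro a _
        refine if_congr ?_ rfl rfl
        constructor
        · rintro ⟨h1, h2⟩; exact ⟨by omega, h2⟩
        · rintro ⟨h1, h2⟩; exact ⟨by omega, h2⟩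
      · rw [if_neg hMn]
        apply Finset.sum_eq_zero
        intro a _
        rw [if_neg]
        rintro ⟨h1, _⟩; omega
    rw [step2]
    -- RHS coefficient
    rw [coeff_add, show (1 - (X:ℤ[X])^M) * Q = Q - X^M * Q by ring, coeff_sub,
      X_pow_mul, coeff_mul_X_pow', coeff_mul_X_pow', hQ, coeff_Csum, coeff_Csum,
      coeff_rsum]
    -- final arithmetic
    have hr : ∀ m, n₁ ≤ m → (rep ↑A B m : ℤ) = 1 := by
      intro m hm; exact_mod_cast congrArg (Nat.cast : ℕ → ℤ) (hrep m hm)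
    by_cases h1 : n < n₁
    · have e1 : ¬ n₁ ≤ n := by omega
      simp only [if_pos h1, if_neg e1]
      by_cases h3 : M ≤ n
      · have h4 : n - M < n₁ := by omega
        simp [h3, h4]
      · simp [h3]
    · have hn1 : n₁ ≤ n := by omega
      have h2 := hr n hn1
      simp only [if_neg h1, if_pos hn1, h2]
      by_cases h3 : M ≤ n
      · by_cases h4 : n - M < n₁
        · have h5 : n - n₁ < M := by omega
          simp only [h3, h4, h5, if_true, if_false]
          ring
        · have h5 : ¬ (n - n₁ < M) := by omega
          have h6 := hr (n - M) (by omega)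
          simp [h3, h4, h5, h6]
      · have h5 : n - n₁ < M := by omega
        simp [h3, h5]
  · -- analytic identity
    intro z hz
    have hgeo : Summable (fun n : ℕ => ‖z‖ ^ n) :=
      summable_geometric_of_lt_one (norm_nonneg z) hz
    set g : ℕ → ℂ := fun n => if n ∈ B then z^n else 0 with hg
    set u : ℕ → ℂ := fun n => if M ≤ n ∧ n - M ∈ B then z^n else 0 with hu
    have hgs : Summable g := by
      apply Summable.of_norm_bounded hgeo
      intro n
      rw [hg]
      by_cases h : n ∈ B <;> simp [h, norm_pow] <;> positivity
    have hus : Summable u := by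
      apply Summable.of_norm_bounded hgeo
      intro n
      rw [hu]
      by_cases h : M ≤ n ∧ n - M ∈ B <;> simp [h, norm_pow] <;> positivity
    have hS : (∑' (b : B), z^(b:ℕ)) = ∑' n, g n := by
      rw [tsum_subtype]
      apply tsum_congr
      intro n
      simp [hg, Set.indicator_apply]
    have hshift : ∑' n, u n = z^M * ∑' n, g n := by
      have h0 : ∀ i ∈ Finset.range M, u i = 0 := by
        intro i hi
        rw [Finset.mem_range] at hi
        rw [hu]
        simp only
        rw [if_neg (by omega)]
      have hsum := hus.sum_add_tsum_nat_add M
      rw [Finset.sum_eq_zero h0, zero_add] at hsum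
      rw [← hsum]
      have heq : ∀ i : ℕ, u (i + M) = z^M * g i := by
        intro i
        have e : i + M - M = i := by omega
        by_cases h : i ∈ B
        · simp [hu, hg, h, e, pow_add, mul_comm, (by omega : M ≤ i + M)]
        · simp [hu, hg, h, e]
      rw [tsum_congr heq, tsum_mul_left]
    have hfin : ∑' n, (g n - u n) = ∑ n ∈ Finset.range (N + M), (g n - u n) := by
      apply tsum_eq_sum
      intro n hn
      rw [Finset.mem_range] at hn
      have hn' : N + M ≤ n := by omega
      have hiff : n - M ∈ B ↔ n ∈ B := by
        have h2 := hper (n - M) (by omega)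
        rwa [show n - M + M = n by omega] at h2
      by_cases h : n ∈ B
      · simp [hg, hu, h, hiff.mpr h, (by omega : M ≤ n)]
      · have hB2 : n - M ∉ B := fun hh => h (hiff.mp hh)
        simp [hg, hu, h, hB2]
    have haF : Polynomial.aeval z F = ∑ b ∈ Finset.range N, g b := by
      rw [hF, map_sum]
      apply Finset.sum_congr rfl
      intro b _
      by_cases h : b ∈ B <;> simp [hg, h]
    have haT : Polynomial.aeval z T = ∑ b ∈ Finset.Ico N (N+M), g b := by
      rw [hT, map_sum]
      apply Finset.sum_congr rfl
      intro b _
      by_cases h : b ∈ B <;> simp [hg, h]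
    have hsplitg : ∑ n ∈ Finset.range (N + M), g n
        = Polynomial.aeval z F + Polynomial.aeval z T := by
      rw [haF, haT, Finset.range_eq_Ico, ← Finset.sum_Ico_consecutive g
        (Nat.zero_le N) (by omega : N ≤ N + M), ← Finset.range_eq_Ico]
    have hsplitu : ∑ n ∈ Finset.range (N + M), u n = z^M * Polynomial.aeval z F := by
      rw [Finset.range_eq_Ico, ← Finset.sum_Ico_consecutive u
        (Nat.zero_le M) (by omega : M ≤ N + M)]
      have h0 : ∑ i ∈ Finset.Ico 0 M, u i = 0 := by
        apply Finset.sum_eq_zero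
        intro i hi
        rw [Finset.mem_Ico] at hi
        rw [hu]
        simp only
        rw [if_neg (by omega)]
      rw [h0, zero_add, Finset.sum_Ico_eq_sum_range]
      have e : N + M - M = N := by omega
      rw [e, haF, Finset.mul_sum]
      apply Finset.sum_congr rfl
      intro i _
      have e2 : M + i - M = i := by omega
      by_cases h : i ∈ B
      · simp [hu, hg, h, e2, pow_add, (by omega : M ≤ M + i)]
      · simp [hu, hg, h, e2]
    have hkey : (1 - z^M) * (∑' n, g n)
        = Polynomial.aeval z F + Polynomial.aeval z T - z^M * Polynomial.aeval z F := by
      have hts : (∑' n, g n) - ∑' n, u n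
          = Polynomial.aeval z F + Polynomial.aeval z T - z^M * Polynomial.aeval z F := by
        rw [← Summable.tsum_sub hgs hus, hfin, Finset.sum_sub_distrib, hsplitg, hsplitu]
      rw [hshift] at hts
      linear_combination hts
    have hne : (1:ℂ) - z^M ≠ 0 := by
      intro h
      have h1 : z^M = 1 := by linear_combination -h
      have h2 : ‖z^M‖ < 1 := by
        rw [norm_pow]
        exact pow_lt_one₀ (norm_nonneg z) hz (by omega)
      rw [h1] at h2
      simp at h2
    rw [hS]
    field_simp
    linear_combination hkey
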